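/- Let Π be a normal logic program and Φ its explicit version. For every atom b ∈ At(Π): (1) Π ⊨_WFS b iff Φ ⊨_WFS b, and (2) Π ⊣_WFS b iff Φ ⊣_WFS b. -/

import Mathlib

namespace DLWFS

universe u

/-- Ground literals over a type `A` of atoms: atoms and their classical complements. -/
inductive Lit (A : Type u) : Type u where
  | pos : A → Lit A
  | neg : A → Lit A

/-- The classical complement `p̄` of a literal `p`. -/
def Lit.compl {A : Type u} : Lit A → Lit A
  | .pos a => .neg a
  | .neg a => .pos a

/-- The three kinds of rules of a defeasible theory. -/
inductive RuleKind : Type where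
  | strict
  | defeasible
  | defeater
deriving DecidableEq

/-- A rule of a defeasible theory: a kind, a body (a set of literals) and a head literal. -/
structure DRule (A : Type u) where
  kind : RuleKind
  body : Set (Lit A)
  head : Lit A

/-- A defeasible theory `D = ⟨R, C, ≺⟩`. -/
structure DTheory (A : Type u) where
  rules : Set (DRule A)
  conflicts : Set (Set (Lit A))
  prec : DRule A → DRule A → Prop

namespace DTheory

variable {A : Type u}

/-- The strict rules `R_s`. -/
def Rs (D : DTheory A) : Set (DRule A) := {r ∈ D.rules | r.kind = RuleKind.strict}

/-- The defeasible rules `R_d`. -/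
def Rd (D : DTheory A) : Set (DRule A) := {r ∈ D.rules | r.kind = RuleKind.defeasible}

/-- The defeater rules `R_u`. -/
def Ru (D : DTheory A) : Set (DRule A) := {r ∈ D.rules | r.kind = RuleKind.defeater}

/-- `C[p]`: the conflict sets containing literal `p`. -/
def Cset (D : DTheory A) (p : Lit A) : Set (Set (Lit A)) := {c ∈ D.conflicts | p ∈ c}

/-- Structural conditions in the definition of a defeasible theory: a countable set of
rules with finite bodies, a countable set of finite conflict sets containing every
minimal conflict set `{p, ¬p}`, and an acyclic priority relation over non-strict rules. -/
def WellFormed (D : DTheory A) : Prop :=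
  D.rules.Countable ∧ D.conflicts.Countable ∧
  (∀ r ∈ D.rules, r.body.Finite) ∧
  (∀ c ∈ D.conflicts, c.Finite) ∧
  (∀ p : A, ({Lit.pos p, Lit.neg p} : Set (Lit A)) ∈ D.conflicts) ∧
  (∀ r s, D.prec r s → r.kind ≠ RuleKind.strict ∧ s.kind ≠ RuleKind.strict) ∧
  (∀ r, ¬ Relation.TransGen D.prec r r)

/-- `C = C_MIN`: the conflict sets are exactly the minimal ones `{p, ¬p}`. -/
def MinimalConflicts (D : DTheory A) : Prop :=
  D.conflicts = {c | ∃ p : A, c = ({Lit.pos p, Lit.neg p} : Set (Lit A))}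

end DTheory

/-- A 3-valued interpretation: a pair `⟨T, F⟩` of sets. -/
abbrev Interp (L : Type u) : Type u := Set L × Set L

variable {A : Type u}

/-- `S` is ADL-unfounded with respect to theory `D` and interpretation `I = ⟨T, F⟩`. -/
def ADLUnfounded (D : DTheory A) (I : Interp (Lit A)) (S : Set (Lit A)) : Prop :=
  ∀ p ∈ S,
    (∀ r ∈ D.Rs, r.head = p → (r.body ∩ (I.2 ∪ S)).Nonempty) ∧
    (∀ r ∈ D.Rd, r.head = p →
      (r.body ∩ (I.2 ∪ S)).Nonempty ∨
      ∃ c ∈ D.conflicts, p ∈ c ∧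
        ∀ q ∈ c \ {p}, ∃ s ∈ D.rules, s.head = q ∧ s.body ⊆ I.1 ∧
          (D.prec r s ∨ s.kind = RuleKind.strict))

/-- `S` is NDL-unfounded with respect to theory `D` and interpretation `I = ⟨T, F⟩`. -/
def NDLUnfounded (D : DTheory A) (I : Interp (Lit A)) (S : Set (Lit A)) : Prop :=
  ∀ p ∈ S,
    (∀ r ∈ D.Rs, r.head = p → (r.body ∩ (I.2 ∪ S)).Nonempty) ∧
    (∀ r ∈ D.Rd, r.head = p →
      (r.body ∩ (I.2 ∪ S)).Nonempty ∨
      ∃ c ∈ D.conflicts, p ∈ c ∧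
        ∀ q ∈ c \ {p}, ∃ s ∈ D.rules, s.head = q ∧ s.body ⊆ I.1 ∧
          ¬ D.prec s r)

/-- `U_D(I)` for ADL: the union of all ADL-unfounded sets. -/
def UA (D : DTheory A) (I : Interp (Lit A)) : Set (Lit A) :=
  ⋃₀ {S | ADLUnfounded D I S}

/-- `U_D(I)` for NDL: the union of all NDL-unfounded sets. -/
def UN (D : DTheory A) (I : Interp (Lit A)) : Set (Lit A) :=
  ⋃₀ {S | NDLUnfounded D I S}

/-- `T_D(I)`: the literals having a witness of provability with respect to `I = ⟨T, F⟩`. -/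
def TD (D : DTheory A) (I : Interp (Lit A)) : Set (Lit A) :=
  {p | ∃ r ∈ D.rules, r.head = p ∧ r.body ⊆ I.1 ∧
    (r.kind = RuleKind.strict ∨
      (r.kind = RuleKind.defeasible ∧
        ∀ c ∈ D.conflicts, p ∈ c →
          ∃ q ∈ c \ {p}, ∀ s ∈ D.rules, s.head = q →
            (D.prec s r ∨ (s.body ∩ I.2).Nonempty)))}

/-- `W_D` for ADL. -/
def WA (D : DTheory A) (I : Interp (Lit A)) : Interp (Lit A) := (TD D I, UA D I)

/-- `W_D` for NDL. -/
def WN (D : DTheory A) (I : Interp (Lit A)) : Interp (Lit A) := (TD D I, UN D I)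

/-- `I` is the well-founded model for the operator `W`: the least fixpoint of `W`
(componentwise order). -/
def IsWFModel {L : Type u} (W : Interp L → Interp L) (I : Interp L) : Prop :=
  W I = I ∧ ∀ J, W J = J → I.1 ⊆ J.1 ∧ I.2 ⊆ J.2

/-- A rule of a normal logic program: `head ← pos, ∼neg`. -/
structure NRule (A : Type u) where
  head : A
  pos : Set A
  neg : Set A

/-- A normal logic program: a set of rules. -/
abbrev NProgram (A : Type u) : Type u := Set (NRule A)

/-- Structural conditions in the definition of a normal logic program: a countable
set of ground rules with finite bodies. -/
def NProgram.WellFormed (P : NProgram A) : Prop :=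
  P.Countable ∧ ∀ r ∈ P, r.pos.Finite ∧ r.neg.Finite

/-- The immediate consequence operator `T_Π` on 3-valued interpretations. -/
def TP (P : NProgram A) (I : Interp A) : Set A :=
  {a | ∃ r ∈ P, r.head = a ∧ r.pos ⊆ I.1 ∧ r.neg ⊆ I.2}

/-- `S` is an unfounded set of program `P` with respect to interpretation `I = ⟨T, F⟩`. -/
def PUnfounded (P : NProgram A) (I : Interp A) (S : Set A) : Prop :=
  ∀ p ∈ S, ∀ r ∈ P, r.head = p →
    (r.pos ∩ (I.2 ∪ S)).Nonempty ∨ (r.neg ∩ I.1).Nonempty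

/-- `U_Π(I)`: the greatest unfounded set (union of all unfounded sets). -/
def UP (P : NProgram A) (I : Interp A) : Set A :=
  ⋃₀ {S | PUnfounded P I S}

/-- `W_Π(I) = ⟨T_Π(I), U_Π(I)⟩`. -/
def WP (P : NProgram A) (I : Interp A) : Interp A := (TP P I, UP P I)

/-- Transfinite iteration of an operator `W` from `⊥`, taking suprema at limit ordinals. -/
noncomputable def iterW {α : Type*} [CompleteLattice α] (W : α → α) : Ordinal.{0} → α :=
  fun o =>
    Ordinal.limitRecOn (motive := fun _ => α) o ⊥ (fun _ ih => W ih)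
      (fun o' _ ih => ⨆ x : Set.Iio o', ih x.1 x.2)

/-- One step of the immediate consequence operator for a set of defeasible-theory rules. -/
def TRstep (R : Set (DRule A)) (S : Set (Lit A)) : Set (Lit A) :=
  {p | ∃ r ∈ R, r.head = p ∧ r.body ⊆ S}

/-- The finite iterates `T_R ↑ n`. -/
def TRiter (R : Set (DRule A)) : ℕ → Set (Lit A)
  | 0 => ∅
  | n + 1 => TRstep R (TRiter R n)

/-- `Cl(R) = T_R ↑ ω`. -/
def ClR (R : Set (DRule A)) : Set (Lit A) := ⋃ n, TRiter R n

/-- The `α`-reduct `D_α^S` of a defeasible theory. -/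
def alphaReduct (D : DTheory A) (S : Set (Lit A)) : Set (DRule A) :=
  D.Rs ∪ {r ∈ D.Rd | ∀ c ∈ D.conflicts, r.head ∈ c → ∃ q ∈ c \ {r.head}, q ∉ S}

/-- The ambiguity-propagating operator `α_D(S) = Cl(D_α^S)`. -/
def alphaOp (D : DTheory A) (S : Set (Lit A)) : Set (Lit A) := ClR (alphaReduct D S)

/-- The `β`-reduct `D_β^S` of a defeasible theory. -/
def betaReduct (D : DTheory A) (S : Set (Lit A)) : Set (DRule A) :=
  D.Rs ∪ {r ∈ D.Rd | ∀ c ∈ D.conflicts, r.head ∈ c →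
    ∃ q ∈ c \ {r.head}, ∀ s ∈ D.rules, s.head = q → (¬ s.body ⊆ S ∨ D.prec s r)}

/-- The ambiguity-blocking operator `β_D(S) = Cl(D_β^S)`. -/
def betaOp (D : DTheory A) (S : Set (Lit A)) : Set (Lit A) := ClR (betaReduct D S)

/-- `S` is an `α`-stable set of `D`. -/
def AlphaStable (D : DTheory A) (S : Set (Lit A)) : Prop := alphaOp D S = S

/-- `S` is a `β`-stable set of `D`. -/
def BetaStable (D : DTheory A) (S : Set (Lit A)) : Prop := betaOp D S = S

/-- The sequence `X_D↑λ`: `X↑0 = ∅`, `X↑(λ+1) = β_D(β_D(X↑λ))`, unions at limits. -/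
noncomputable def Xseq (D : DTheory A) : Ordinal.{0} → Set (Lit A) :=
  iterW (fun S => betaOp D (betaOp D S))

/-- The Gelfond–Lifschitz reduct `Π^S`. -/
def glReduct (P : NProgram A) (S : Set A) : NProgram A :=
  {r' | ∃ r ∈ P, r.neg ∩ S = ∅ ∧ r' = NRule.mk r.head r.pos ∅}

/-- One step of the immediate consequence operator for a NAF-free program. -/
def TPstep (P : NProgram A) (S : Set A) : Set A :=
  {a | ∃ r ∈ P, r.head = a ∧ r.pos ⊆ S}

/-- The finite iterates `T_Π ↑ n` of a NAF-free program. -/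
def TPiter (P : NProgram A) : ℕ → Set A
  | 0 => ∅
  | n + 1 => TPstep P (TPiter P n)

/-- `Cl(Π) = T_Π ↑ ω`. -/
def ClP (P : NProgram A) : Set A := ⋃ n, TPiter P n

/-- The Gelfond–Lifschitz operator `γ_Π(S) = Cl(Π^S)`. -/
def gamma (P : NProgram A) (S : Set A) : Set A := ClP (glReduct P S)

/-- `S` is a stable model of `P`. -/
def StableModel (P : NProgram A) (S : Set A) : Prop := gamma P S = S

/-- `Prod(C[p])`: all sets obtained by choosing one literal other than `p` from each
conflict set containing `p`. -/
def ProdC (D : DTheory A) (p : Lit A) : Set (Set (Lit A)) :=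
  {Q | ∃ f : Set (Lit A) → Lit A,
    (∀ c ∈ D.conflicts, p ∈ c → f c ∈ c \ {p}) ∧
    Q = f '' {c ∈ D.conflicts | p ∈ c}}

/-- The logic program translation `Π_D` of a defeasible theory `D` (negative literals
are treated as fresh atoms, so the atoms of the program are the literals of `D`). -/
def lpTrans (D : DTheory A) : NProgram (Lit A) :=
  {r' | ∃ r ∈ D.Rs, r' = NRule.mk r.head r.body ∅} ∪
  {r' | ∃ r ∈ D.Rd, ∃ Q ∈ ProdC D r.head, r' = NRule.mk r.head r.body Q}

/-- The explicit version `Φ` of a normal program `Π`: atoms of `Φ` are the literals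
over the atoms of `Π` (`¬p` being a fresh atom). -/
def explicitVer (P : NProgram A) : NProgram (Lit A) :=
  {r' | ∃ r ∈ P, r' = NRule.mk (Lit.pos r.head) (Lit.pos '' r.pos ∪ Lit.neg '' r.neg) ∅} ∪
  {r' | ∃ p : A, r' = NRule.mk (Lit.neg p) ∅ {Lit.pos p}}

/-- The minimal conflict sets over atom type `A`. -/
def CMin (A : Type u) : Set (Set (Lit A)) :=
  {c | ∃ p : A, c = ({Lit.pos p, Lit.neg p} : Set (Lit A))}

/-- The defeasible theory translation `D_Π` of a normal program `Π`: each program rule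
becomes a strict rule (default literals `∼b` becoming negative literals `¬b`), and each
atom `p` yields a presumption `∅ ⇒ ¬p`; conflict sets are minimal and `≺` is empty. -/
def dtTrans (P : NProgram A) : DTheory A :=
  { rules :=
      {e | ∃ r ∈ P, e = DRule.mk RuleKind.strict
            (Lit.pos '' r.pos ∪ Lit.neg '' r.neg) (Lit.pos r.head)} ∪
      {e | ∃ p : A, e = DRule.mk RuleKind.defeasible ∅ (Lit.neg p)}
    conflicts := CMin A
    prec := fun _ _ => False }

/-- `M^¬ = M ∪ {¬p : p ∉ M}`, atoms being identified with positive literals. -/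
def negCompl (M : Set A) : Set (Lit A) :=
  Lit.pos '' M ∪ Lit.neg '' {p | p ∉ M}

end DLWFS

namespace DLWFS

section Aux

variable {A : Type*}

/-- Lift a 3-valued interpretation of `Π` to one of `Φ`. -/
def liftI (I : Interp A) : Interp (Lit A) :=
  (Lit.pos '' I.1 ∪ Lit.neg '' I.2, Lit.pos '' I.2 ∪ Lit.neg '' I.1)

/-- Project a 3-valued interpretation of `Φ` to one of `Π`. -/
def projI (J : Interp (Lit A)) : Interp A :=
  ({b | Lit.pos b ∈ J.1}, {b | Lit.pos b ∈ J.2})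

/-- The explicit version of a single program rule. -/
def erule (r : NRule A) : NRule (Lit A) :=
  NRule.mk (Lit.pos r.head) (Lit.pos '' r.pos ∪ Lit.neg '' r.neg) ∅

/-- The rule `¬p ← ∼p` of the explicit version. -/
def nrule (p : A) : NRule (Lit A) := NRule.mk (Lit.neg p) ∅ {Lit.pos p}

lemma mem_explicit {P : NProgram A} {r' : NRule (Lit A)} :
    r' ∈ explicitVer P ↔ (∃ r ∈ P, r' = erule r) ∨ (∃ p : A, r' = nrule p) := Iff.rfl

lemma erule_mem {P : NProgram A} {r : NRule A} (h : r ∈ P) :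
    erule r ∈ explicitVer P := Or.inl ⟨r, h, rfl⟩

lemma nrule_mem {P : NProgram A} (p : A) : nrule p ∈ explicitVer P := Or.inr ⟨p, rfl⟩

@[simp] lemma pos_mem_union {X Y : Set A} {a : A} :
    Lit.pos a ∈ Lit.pos '' X ∪ Lit.neg '' Y ↔ a ∈ X := by simp

@[simp] lemma neg_mem_union {X Y : Set A} {a : A} :
    Lit.neg a ∈ Lit.pos '' X ∪ Lit.neg '' Y ↔ a ∈ Y := by simp

lemma mem_UP {P : NProgram A} {I : Interp A} {S : Set A} (h : PUnfounded P I S)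
    {a : A} (ha : a ∈ S) : a ∈ UP P I := ⟨S, h, ha⟩

lemma UP_unfounded (P : NProgram A) (I : Interp A) : PUnfounded P I (UP P I) := by
  intro p hp r hr hh
  obtain ⟨S, hS, hpS⟩ := hp
  rcases hS p hpS r hr hh with ⟨q, hq1, hq2⟩ | h
  · exact Or.inl ⟨q, hq1, hq2.imp_right fun h => ⟨S, hS, h⟩⟩
  · exact Or.inr h

lemma wp_fix_iff {P : NProgram A} {I : Interp A} :
    WP P I = I ↔ TP P I = I.1 ∧ UP P I = I.2 := by
  constructor
  · intro h; exact ⟨congrArg Prod.fst h, congrArg Prod.snd h⟩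
  · rintro ⟨h1, h2⟩; rw [WP, h1, h2]

/-- In any `Φ`-unfounded set, negative literals have their atom true. -/
lemma neg_in_unfounded {P : NProgram A} {J : Interp (Lit A)} {S : Set (Lit A)}
    (hS : PUnfounded (explicitVer P) J S) {q : A} (hq : Lit.neg q ∈ S) :
    Lit.pos q ∈ J.1 := by
  rcases hS _ hq (nrule q) (nrule_mem q) rfl with ⟨y, hy, _⟩ | ⟨y, hy1, hy2⟩
  · exact absurd hy (by simp [nrule])
  · obtain rfl : y = Lit.pos q := hy1
    exact hy2

/-- The lift of a fixpoint of `W_Π` is a fixpoint of `W_Φ`. -/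
lemma lift_fix {P : NProgram A} {I : Interp A} (h : WP P I = I) :
    WP (explicitVer P) (liftI I) = liftI I := by
  obtain ⟨hT, hF⟩ := wp_fix_iff.mp h
  rw [wp_fix_iff]
  constructor
  · -- T component
    ext x
    constructor
    · rintro ⟨r', hr', hh, hpos, hneg⟩
      rcases hr' with ⟨r, hrP, rfl⟩ | ⟨p, rfl⟩
      · subst hh
        have hp : r.pos ⊆ I.1 := fun q hq => pos_mem_union.mp (hpos (Or.inl ⟨q, hq, rfl⟩))
        have hn : r.neg ⊆ I.2 := fun q hq => neg_mem_union.mp (hpos (Or.inr ⟨q, hq, rfl⟩))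
        have : r.head ∈ TP P I := ⟨r, hrP, rfl, hp, hn⟩
        exact Or.inl ⟨r.head, hT ▸ this, rfl⟩
      · subst hh
        have : Lit.pos p ∈ (liftI I).2 := hneg rfl
        exact Or.inr ⟨p, pos_mem_union.mp this, rfl⟩
    · rintro (⟨a, ha, rfl⟩ | ⟨a, ha, rfl⟩)
      · obtain ⟨r, hrP, hh, hp, hn⟩ : a ∈ TP P I := hT.symm ▸ ha
        refine ⟨erule r, erule_mem hrP, by rw [erule, hh], ?_, ?_⟩
        · rintro y (⟨q, hq, rfl⟩ | ⟨q, hq, rfl⟩)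
          · exact Or.inl ⟨q, hp hq, rfl⟩
          · exact Or.inr ⟨q, hn hq, rfl⟩
        · rintro y hy; exact absurd hy (by simp [erule])
      · exact ⟨nrule a, nrule_mem a, rfl, by rintro y hy; exact absurd hy (by simp [nrule]),
          by rintro y rfl; exact Or.inl ⟨a, ha, rfl⟩⟩
  · -- F component
    apply Set.Subset.antisymm
    · rintro x ⟨S, hS, hxS⟩
      rcases x with b | q
      · -- show b ∈ I.2
        have hb : b ∈ UP P I := by
          refine mem_UP (S := {a | Lit.pos a ∈ S}) ?_ hxS
          intro a ha r hrP hh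
          rcases hS _ ha (erule r) (erule_mem hrP) (by rw [erule, hh]) with
            ⟨y, hy1, hy2⟩ | ⟨y, hy1, _⟩
          · rcases hy1 with ⟨q, hq, rfl⟩ | ⟨q, hq, rfl⟩
            · -- y = pos q, q ∈ r.pos
              rcases hy2 with h2 | h2
              · exact Or.inl ⟨q, hq, Or.inl (pos_mem_union.mp h2)⟩
              · exact Or.inl ⟨q, hq, Or.inr h2⟩
            · -- y = neg q, q ∈ r.neg
              rcases hy2 with h2 | h2
              · exact Or.inr ⟨q, hq, neg_mem_union.mp h2⟩
              · exact Or.inr ⟨q, hq, pos_mem_union.mp (neg_in_unfounded hS h2)⟩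
          · exact absurd hy1 (by simp [erule])
        exact Or.inl ⟨b, hF ▸ hb, rfl⟩
      · have : Lit.pos q ∈ (liftI I).1 := neg_in_unfounded hS hxS
        exact Or.inr ⟨q, pos_mem_union.mp this, rfl⟩
    · intro x hx
      refine mem_UP (S := (liftI I).2) ?_ hx
      intro p hp r' hr' hh
      rcases hr' with ⟨r, hrP, rfl⟩ | ⟨q, rfl⟩
      · subst hh
        have hb : r.head ∈ UP P I := hF ▸ pos_mem_union.mp hp
        rcases UP_unfounded P I r.head hb r hrP rfl with ⟨q, hq1, hq2⟩ | ⟨q, hq1, hq2⟩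
        · have hq2' : q ∈ I.2 := by
            rcases hq2 with h | h
            · exact h
            · exact hF ▸ h
          exact Or.inl ⟨Lit.pos q, Or.inl ⟨q, hq1, rfl⟩, Or.inl (Or.inl ⟨q, hq2', rfl⟩)⟩
        · exact Or.inl ⟨Lit.neg q, Or.inr ⟨q, hq1, rfl⟩, Or.inl (Or.inr ⟨q, hq2, rfl⟩)⟩
      · subst hh
        have : q ∈ I.1 := neg_mem_union.mp hp
        exact Or.inr ⟨Lit.pos q, rfl, Or.inl ⟨q, this, rfl⟩⟩

/-- In a fixpoint of `W_Φ`, a true negative literal has its atom false. -/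
lemma neg_true_pos_false {P : NProgram A} {J : Interp (Lit A)}
    (hT : TP (explicitVer P) J = J.1) {q : A} (h : Lit.neg q ∈ J.1) :
    Lit.pos q ∈ J.2 := by
  obtain ⟨r', hr', hh, _, hneg⟩ : Lit.neg q ∈ TP (explicitVer P) J := hT.symm ▸ h
  rcases hr' with ⟨r, _, rfl⟩ | ⟨p, rfl⟩
  · exact absurd hh (by simp [erule])
  · obtain rfl : p = q := by simpa [nrule] using hh
    exact hneg rfl

/-- In a fixpoint of `W_Φ`, a true positive literal makes the negative literal false. -/
lemma pos_true_neg_false {P : NProgram A} {J : Interp (Lit A)}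
    (hF : UP (explicitVer P) J = J.2) {q : A} (h : Lit.pos q ∈ J.1) :
    Lit.neg q ∈ J.2 := by
  rw [← hF]
  refine mem_UP (S := {Lit.neg q}) ?_ rfl
  intro p hp r' hr' hh
  rw [Set.mem_singleton_iff] at hp
  subst hp
  rcases hr' with ⟨r, _, rfl⟩ | ⟨p', rfl⟩
  · exact absurd hh (by simp [erule])
  · obtain rfl : p' = q := by simpa [nrule] using hh
    exact Or.inr ⟨_, rfl, h⟩

/-- A false negative literal in a fixpoint of `W_Φ` has its atom true. -/
lemma neg_false_pos_true {P : NProgram A} {J : Interp (Lit A)}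
    (hF : UP (explicitVer P) J = J.2) {q : A} (h : Lit.neg q ∈ J.2) :
    Lit.pos q ∈ J.1 := by
  obtain ⟨S, hS, hqS⟩ : Lit.neg q ∈ UP (explicitVer P) J := hF.symm ▸ h
  exact neg_in_unfounded hS hqS

/-- The projection of a fixpoint of `W_Φ` is a fixpoint of `W_Π`. -/
lemma proj_fix {P : NProgram A} {J : Interp (Lit A)} (h : WP (explicitVer P) J = J) :
    WP P (projI J) = projI J := by
  obtain ⟨hT, hF⟩ := wp_fix_iff.mp h
  rw [wp_fix_iff]
  constructor
  · -- T component
    ext b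
    constructor
    · rintro ⟨r, hrP, rfl, hp, hn⟩
      have : Lit.pos r.head ∈ TP (explicitVer P) J := by
        refine ⟨erule r, erule_mem hrP, rfl, ?_, ?_⟩
        · rintro y (⟨q, hq, rfl⟩ | ⟨q, hq, rfl⟩)
          · exact hp hq
          · -- need neg q ∈ J.1; q ∈ r.neg so pos q ∈ J.2
            refine hT ▸ ⟨nrule q, nrule_mem q, rfl, ?_, ?_⟩
            · rintro y hy; exact absurd hy (by simp [nrule])
            · rintro y rfl; exact hn hq
        · rintro y hy; exact absurd hy (by simp [erule])
      exact show Lit.pos r.head ∈ J.1 from hT ▸ this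
    · intro hb
      obtain ⟨r', hr', hh, hpos, _⟩ : Lit.pos b ∈ TP (explicitVer P) J := hT.symm ▸ hb
      rcases hr' with ⟨r, hrP, rfl⟩ | ⟨p, rfl⟩
      · obtain rfl : r.head = b := by simpa [erule] using hh
        refine ⟨r, hrP, rfl, ?_, ?_⟩
        · intro q hq; exact hpos (Or.inl ⟨q, hq, rfl⟩)
        · intro q hq
          exact neg_true_pos_false hT (hpos (Or.inr ⟨q, hq, rfl⟩))
      · exact absurd hh (by simp [nrule])
  · -- F component
    apply Set.Subset.antisymm
    · rintro b ⟨S, hS, hbS⟩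
      have : Lit.pos b ∈ UP (explicitVer P) J := by
        refine mem_UP (S := Lit.pos '' S) ?_ ⟨b, hbS, rfl⟩
        rintro p ⟨a, haS, rfl⟩ r' hr' hh
        rcases hr' with ⟨r, hrP, rfl⟩ | ⟨p', rfl⟩
        · obtain rfl : r.head = a := by simpa [erule] using hh
          rcases hS _ haS r hrP rfl with ⟨q, hq1, hq2⟩ | ⟨q, hq1, hq2⟩
          · refine Or.inl ⟨Lit.pos q, Or.inl ⟨q, hq1, rfl⟩, ?_⟩
            rcases hq2 with h2 | h2
            · exact Or.inl h2
            · exact Or.inr ⟨q, h2, rfl⟩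
          · exact Or.inl ⟨Lit.neg q, Or.inr ⟨q, hq1, rfl⟩,
              Or.inl (pos_true_neg_false hF hq2)⟩
        · exact absurd hh (by simp [nrule])
      exact show Lit.pos b ∈ J.2 from hF ▸ this
    · intro b hb
      obtain ⟨S, hS, hbS⟩ : Lit.pos b ∈ UP (explicitVer P) J := hF.symm ▸ hb
      refine mem_UP (S := {a | Lit.pos a ∈ S}) ?_ hbS
      intro a ha r hrP hh
      rcases hS _ ha (erule r) (erule_mem hrP) (by rw [erule, hh]) with
        ⟨y, hy1, hy2⟩ | ⟨y, hy1, _⟩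
      · rcases hy1 with ⟨q, hq, rfl⟩ | ⟨q, hq, rfl⟩
        · rcases hy2 with h2 | h2
          · exact Or.inl ⟨q, hq, Or.inl h2⟩
          · exact Or.inl ⟨q, hq, Or.inr h2⟩
        · rcases hy2 with h2 | h2
          · exact Or.inr ⟨q, hq, neg_false_pos_true hF h2⟩
          · exact Or.inr ⟨q, hq, neg_in_unfounded hS h2⟩
      · exact absurd hy1 (by simp [erule])

end Aux

/-- Let `Π` be a normal program and `Φ` its explicit version. For every atom `b`:
`Π ⊨_WFS b` iff `Φ ⊨_WFS b`, and `Π ⊣_WFS b` iff `Φ ⊣_WFS b`. -/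
theorem explicit_version_wfs {A : Type*} (P : NProgram A) (hwf : P.WellFormed)
    (IP : Interp A) (hIP : IsWFModel (WP P) IP)
    (IPhi : Interp (Lit A)) (hIPhi : IsWFModel (WP (explicitVer P)) IPhi) :
    ∀ b : A, (b ∈ IP.1 ↔ Lit.pos b ∈ IPhi.1) ∧ (b ∈ IP.2 ↔ Lit.pos b ∈ IPhi.2) := by
  intro b
  have hproj := hIP.2 (projI IPhi) (proj_fix hIPhi.1)
  have hlift := hIPhi.2 (liftI IP) (lift_fix hIP.1)
  constructor
  · constructor
    · intro h; exact hproj.1 h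
    · intro h
      rcases hlift.1 h with ⟨a, ha, heq⟩ | ⟨a, _, heq⟩
      · obtain rfl : a = b := by simpa using heq
        exact ha
      · exact absurd heq (by simp)
  · constructor
    · intro h; exact hproj.2 h
    · intro h
      rcases hlift.2 h with ⟨a, ha, heq⟩ | ⟨a, _, heq⟩
      · obtain rfl : a = b := by simpa using heq
        exact ha
      · exact absurd heq (by simp)

end DLWFS
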